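/- arXiv:2108.13284 — 3 statements merged into one kernel-verified Lean document; each statement's English description precedes it below -/
import Mathlib

section
/- For any integer n ≥ 4, define M_n = min over all sign choices b_k ∈ {1,-1} (k = 0,...,n/4-1) of |∑_{k=0}^{n/4-1} b_k sin((2k+1)π/n)|. Then M_{4n} ≤ M_n · 4 sin(π/(4n)) sin(π/(2n)). -/
open Real Finset

noncomputable def M (n : ℕ) : ℝ :=
  sInf {x : ℝ | ∃ b : ℕ → ℝ, (∀ k, b k = 1 ∨ b k = -1) ∧
    x = |∑ k ∈ Finset.range (n / 4), b k * Real.sin ((2 * (k : ℝ) + 1) * Real.pi / n)|}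

lemma trig_key (K t : ℝ) :
    -Real.sin ((8*K+1)*t) + Real.sin ((8*K+3)*t) + Real.sin ((8*K+5)*t) - Real.sin ((8*K+7)*t)
      = Real.sin ((8*K+4)*t) * (4 * Real.sin t * Real.sin (2*t)) := by
  rw [show (8*K+1)*t = (8*K+4)*t - 3*t by ring,
      show (8*K+3)*t = (8*K+4)*t - t by ring,
      show (8*K+5)*t = (8*K+4)*t + t by ring,
      show (8*K+7)*t = (8*K+4)*t + 3*t by ring,
      Real.sin_sub, Real.sin_sub, Real.sin_add, Real.sin_add,
      Real.sin_two_mul, Real.sin_three_mul, Real.cos_three_mul]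
  linear_combination (-8 * Real.sin ((8*K+4)*t) * Real.cos t) * Real.sin_sq_add_cos_sq t

lemma sum4 (m : ℕ) (f : ℕ → ℝ) :
    ∑ j ∈ Finset.range (4*m), f j
      = ∑ k ∈ Finset.range m, (f (4*k) + f (4*k+1) + f (4*k+2) + f (4*k+3)) := by
  induction m with
  | zero => simp
  | succ m ih =>
    rw [show 4*(m+1) = (4*m+1+1+1)+1 by omega,
        Finset.sum_range_succ, Finset.sum_range_succ, Finset.sum_range_succ,
        Finset.sum_range_succ, ih, Finset.sum_range_succ,
        show 4*m+1+1 = 4*m+2 by omega, show 4*m+1+1+1 = 4*m+3 by omega]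
    ring

theorem M_four_mul_le (n : ℕ) (h4 : 4 ∣ n) (hn : 4 ≤ n) :
    M (4 * n) ≤ M n * (4 * Real.sin (Real.pi / (4 * n)) * Real.sin (Real.pi / (2 * n))) := by
  obtain ⟨m, rfl⟩ := h4
  have hm : 1 ≤ m := by omega
  have hm0 : ((m:ℝ)) ≠ 0 := Nat.cast_ne_zero.mpr (by omega)
  have hmpos : (0:ℝ) < (m:ℝ) := by
    have : (0:ℕ) < m := by omega
    exact_mod_cast this
  have hm1 : (1:ℝ) ≤ (m:ℝ) := by exact_mod_cast hm
  set C : ℝ := 4 * Real.sin (Real.pi / (4 * ((4*m:ℕ):ℝ))) * Real.sin (Real.pi / (2 * ((4*m:ℕ):ℝ))) with hC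
  have hcast : ((4*m:ℕ):ℝ) = 4*(m:ℝ) := by push_cast; ring
  have hc0 : 0 < C := by
    rw [hC, hcast]
    have h1 : 0 < Real.sin (Real.pi / (4*(4*(m:ℝ)))) :=
      Real.sin_pos_of_pos_of_lt_pi (by positivity) (div_lt_self Real.pi_pos (by nlinarith [hm1]))
    have h2 : 0 < Real.sin (Real.pi / (2*(4*(m:ℝ)))) :=
      Real.sin_pos_of_pos_of_lt_pi (by positivity) (div_lt_self Real.pi_pos (by nlinarith [hm1]))
    positivity
  rw [← div_le_iff₀ hc0]
  unfold M
  apply le_csInf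
  · exact ⟨_, fun _ => (1:ℝ), fun _ => Or.inl rfl, rfl⟩
  · rintro x ⟨b, hb, rfl⟩
    rw [div_le_iff₀ hc0]
    set c : ℕ → ℝ := fun j => if j % 4 = 0 ∨ j % 4 = 3 then -(b (j/4)) else b (j/4) with hcdef
    have hsign : ∀ j, c j = 1 ∨ c j = -1 := by
      intro j
      simp only [hcdef]
      split
      · rcases hb (j/4) with h|h <;> simp [h]
      · exact hb (j/4)
    have hbdd : BddBelow {x : ℝ | ∃ b : ℕ → ℝ, (∀ k, b k = 1 ∨ b k = -1) ∧
        x = |∑ k ∈ Finset.range (4*(4*m) / 4), b k * Real.sin ((2 * (k : ℝ) + 1) * Real.pi / ((4*(4*m):ℕ):ℝ))|} := by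
      refine ⟨0, ?_⟩
      rintro y ⟨b', _, rfl⟩
      exact abs_nonneg _
    have hA : (∑ j ∈ Finset.range (4*(4*m) / 4), c j * Real.sin ((2 * (j : ℝ) + 1) * Real.pi / ((4*(4*m):ℕ):ℝ)))
        = (∑ k ∈ Finset.range (4*m / 4), b k * Real.sin ((2 * (k : ℝ) + 1) * Real.pi / ((4*m:ℕ):ℝ))) * C := by
      rw [show 4*(4*m)/4 = 4*m by omega, show 4*m/4 = m by omega, sum4, Finset.sum_mul]
      refine Finset.sum_congr rfl fun k _ => ?_
      have e0 : c (4*k) = -(b k) := by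
        simp only [hcdef, show (4*k) % 4 = 0 by omega, show (4*k)/4 = k by omega]
        simp
      have e1 : c (4*k+1) = b k := by
        simp only [hcdef, show (4*k+1) % 4 = 1 by omega, show (4*k+1)/4 = k by omega]
        simp
      have e2 : c (4*k+2) = b k := by
        simp only [hcdef, show (4*k+2) % 4 = 2 by omega, show (4*k+2)/4 = k by omega]
        simp
      have e3 : c (4*k+3) = -(b k) := by
        simp only [hcdef, show (4*k+3) % 4 = 3 by omega, show (4*k+3)/4 = k by omega]
        simp
      rw [e0, e1, e2, e3,
        show (2 * ((4*k:ℕ):ℝ) + 1) * Real.pi / ((4*(4*m):ℕ):ℝ)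
            = (8*(k:ℝ)+1) * (Real.pi / (16*(m:ℝ))) by push_cast; field_simp; ring,
        show (2 * ((4*k+1:ℕ):ℝ) + 1) * Real.pi / ((4*(4*m):ℕ):ℝ)
            = (8*(k:ℝ)+3) * (Real.pi / (16*(m:ℝ))) by push_cast; field_simp; ring,
        show (2 * ((4*k+2:ℕ):ℝ) + 1) * Real.pi / ((4*(4*m):ℕ):ℝ)
            = (8*(k:ℝ)+5) * (Real.pi / (16*(m:ℝ))) by push_cast; field_simp; ring,
        show (2 * ((4*k+3:ℕ):ℝ) + 1) * Real.pi / ((4*(4*m):ℕ):ℝ)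
            = (8*(k:ℝ)+7) * (Real.pi / (16*(m:ℝ))) by push_cast; field_simp; ring,
        show (2 * (k:ℝ) + 1) * Real.pi / ((4*m:ℕ):ℝ)
            = (8*(k:ℝ)+4) * (Real.pi / (16*(m:ℝ))) by push_cast; field_simp; ring,
        hC,
        show Real.pi / (4 * ((4*m:ℕ):ℝ)) = Real.pi / (16*(m:ℝ)) by push_cast; ring_nf,
        show Real.pi / (2 * ((4*m:ℕ):ℝ)) = 2 * (Real.pi / (16*(m:ℝ))) by push_cast; field_simp; ring]
      linear_combination (b k) * trig_key (k:ℝ) (Real.pi / (16*(m:ℝ)))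
    have hXC : |∑ k ∈ Finset.range (4*m / 4), b k * Real.sin ((2 * (k : ℝ) + 1) * Real.pi / ((4*m:ℕ):ℝ))| * C
        = |∑ j ∈ Finset.range (4*(4*m) / 4), c j * Real.sin ((2 * (j : ℝ) + 1) * Real.pi / ((4*(4*m):ℕ):ℝ))| := by
      rw [hA, abs_mul, abs_of_pos hc0]
    rw [hXC]
    exact csInf_le hbdd ⟨c, hsign, rfl⟩
end

section
/- For every integer s ≥ 2, M_{2^s} ≤ 2^{s-2} · ∏_{k=1}^{s} sin(π/2^k), where M_n = min over sign choices b_k ∈ {1,-1} of |∑_{k=0}^{n/4-1} b_k sin((2k+1)π/n)|. -/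
open Real Finset

lemma sum_pairs (m : ℕ) (f : ℕ → ℝ) :
    ∑ k ∈ range (2 * m), f k = ∑ j ∈ range m, (f (2 * j) + f (2 * j + 1)) := by
  induction m with
  | zero => simp
  | succ m ih =>
    rw [Nat.mul_succ, Finset.sum_range_succ, Finset.sum_range_succ (n := 2 * m),
      Finset.sum_range_succ (n := m), ← ih]
    ring

lemma sin_pair (x θ : ℝ) :
    Real.sin ((2 * (2 * x) + 1) * θ) - Real.sin ((2 * (2 * x + 1) + 1) * θ)
      = -2 * Real.sin θ * Real.cos ((2 * x + 1) * (2 * θ)) := by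
  rw [Real.sin_sub_sin]
  have h1 : ((2 * (2 * x) + 1) * θ - (2 * (2 * x + 1) + 1) * θ) / 2 = -θ := by ring
  have h2 : ((2 * (2 * x) + 1) * θ + (2 * (2 * x + 1) + 1) * θ) / 2 = (2 * x + 1) * (2 * θ) := by
    ring
  rw [h1, h2, Real.sin_neg]
  ring

lemma cos_pair (x θ : ℝ) :
    Real.cos ((2 * (2 * x) + 1) * θ) - Real.cos ((2 * (2 * x + 1) + 1) * θ)
      = 2 * Real.sin θ * Real.sin ((2 * x + 1) * (2 * θ)) := by
  rw [Real.cos_sub_cos]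
  have h1 : ((2 * (2 * x) + 1) * θ - (2 * (2 * x + 1) + 1) * θ) / 2 = -θ := by ring
  have h2 : ((2 * (2 * x) + 1) * θ + (2 * (2 * x + 1) + 1) * θ) / 2 = (2 * x + 1) * (2 * θ) := by
    ring
  rw [h1, h2, Real.sin_neg]
  ring

lemma key (s : ℕ) (hs : 2 ≤ s) :
    ∃ b c : ℕ → ℝ, (∀ k, b k = 1 ∨ b k = -1) ∧ (∀ k, c k = 1 ∨ c k = -1) ∧
      |∑ k ∈ range (2 ^ (s - 2)), b k * Real.sin ((2 * (k : ℝ) + 1) * (Real.pi / 2 ^ s))| =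
        2 ^ (s - 2) * ∏ k ∈ Icc 1 s, Real.sin (Real.pi / 2 ^ k) ∧
      |∑ k ∈ range (2 ^ (s - 2)), c k * Real.cos ((2 * (k : ℝ) + 1) * (Real.pi / 2 ^ s))| =
        2 ^ (s - 2) * ∏ k ∈ Icc 1 s, Real.sin (Real.pi / 2 ^ k) := by
  induction s, hs using Nat.le_induction with
  | base =>
    refine ⟨fun _ => 1, fun _ => 1, fun _ => Or.inl rfl, fun _ => Or.inl rfl, ?_, ?_⟩
    · have hIcc : Finset.Icc 1 2 = {1, 2} := rfl
      have hnn : 0 ≤ Real.sin (Real.pi / 4) := Real.sin_nonneg_of_nonneg_of_le_pi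
        (by positivity) (by nlinarith [Real.pi_pos])
      simp [hIcc, Real.sin_pi_div_two, abs_of_nonneg hnn]
      positivity
    · have hIcc : Finset.Icc 1 2 = {1, 2} := rfl
      simp [hIcc, Real.sin_pi_div_two, Real.cos_pi_div_four, Real.sin_pi_div_four]
      positivity
  | succ s hs ih =>
    obtain ⟨b, c, hb, hc, hbs, hcs⟩ := ih
    have hrange : 2 ^ (s + 1 - 2) = 2 * 2 ^ (s - 2) := by
      rw [show s + 1 - 2 = (s - 2) + 1 by omega, pow_succ]; ring
    set θ : ℝ := Real.pi / 2 ^ (s + 1) with hθdef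
    have hθ2 : 2 * θ = Real.pi / 2 ^ s := by
      rw [hθdef, pow_succ]; field_simp
    have hθpos : 0 < Real.sin θ := by
      apply Real.sin_pos_of_pos_of_lt_pi
      · positivity
      · rw [hθdef]
        have h1 : (1:ℝ) < 2 ^ (s + 1) := one_lt_pow₀ one_lt_two (by omega)
        exact div_lt_self Real.pi_pos h1
    have hprod : ∏ k ∈ Icc 1 (s + 1), Real.sin (Real.pi / 2 ^ k)
        = (∏ k ∈ Icc 1 s, Real.sin (Real.pi / 2 ^ k)) * Real.sin θ :=
      Finset.prod_Icc_succ_top (by omega) _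
    refine ⟨fun k => if k % 2 = 0 then c (k / 2) else -(c (k / 2)),
            fun k => if k % 2 = 0 then b (k / 2) else -(b (k / 2)), ?_, ?_, ?_, ?_⟩
    · intro k
      rcases hc (k / 2) with h | h <;> by_cases hk : k % 2 = 0 <;> simp [hk, h]
    · intro k
      rcases hb (k / 2) with h | h <;> by_cases hk : k % 2 = 0 <;> simp [hk, h]
    · rw [hrange, sum_pairs]
      have hterm : ∀ j ∈ range (2 ^ (s - 2)),
          ((if (2 * j) % 2 = 0 then c ((2 * j) / 2) else -(c ((2 * j) / 2))) *
              Real.sin ((2 * ((2 * j : ℕ) : ℝ) + 1) * θ) +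
            (if (2 * j + 1) % 2 = 0 then c ((2 * j + 1) / 2) else -(c ((2 * j + 1) / 2))) *
              Real.sin ((2 * ((2 * j + 1 : ℕ) : ℝ) + 1) * θ))
          = (-2 * Real.sin θ) * (c j * Real.cos ((2 * (j : ℝ) + 1) * (Real.pi / 2 ^ s))) := by
        intro j _
        have e1 : (2 * j) % 2 = 0 := by omega
        have e2 : (2 * j + 1) % 2 ≠ 0 := by omega
        have e3 : (2 * j) / 2 = j := by omega
        have e4 : (2 * j + 1) / 2 = j := by omega
        rw [if_pos e1, if_neg e2, e3, e4, ← hθ2]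
        push_cast
        linear_combination (c j) * sin_pair (j : ℝ) θ
      rw [Finset.sum_congr rfl hterm, ← Finset.mul_sum, abs_mul, hcs, hprod]
      have habs : |(-2 : ℝ) * Real.sin θ| = 2 * Real.sin θ := by
        rw [abs_of_nonpos (by nlinarith)]; ring
      rw [habs, show s + 1 - 2 = (s - 2) + 1 by omega, pow_succ]
      ring
    · rw [hrange, sum_pairs]
      have hterm : ∀ j ∈ range (2 ^ (s - 2)),
          ((if (2 * j) % 2 = 0 then b ((2 * j) / 2) else -(b ((2 * j) / 2))) *
              Real.cos ((2 * ((2 * j : ℕ) : ℝ) + 1) * θ) +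
            (if (2 * j + 1) % 2 = 0 then b ((2 * j + 1) / 2) else -(b ((2 * j + 1) / 2))) *
              Real.cos ((2 * ((2 * j + 1 : ℕ) : ℝ) + 1) * θ))
          = (2 * Real.sin θ) * (b j * Real.sin ((2 * (j : ℝ) + 1) * (Real.pi / 2 ^ s))) := by
        intro j _
        have e1 : (2 * j) % 2 = 0 := by omega
        have e2 : (2 * j + 1) % 2 ≠ 0 := by omega
        have e3 : (2 * j) / 2 = j := by omega
        have e4 : (2 * j + 1) / 2 = j := by omega
        rw [if_pos e1, if_neg e2, e3, e4, ← hθ2]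
        push_cast
        linear_combination (b j) * cos_pair (j : ℝ) θ
      rw [Finset.sum_congr rfl hterm, ← Finset.mul_sum, abs_mul, hbs, hprod]
      rw [abs_of_nonneg (by nlinarith), show s + 1 - 2 = (s - 2) + 1 by omega, pow_succ]
      ring

theorem M_pow_two_le (s : ℕ) (hs : 2 ≤ s) :
    M (2 ^ s) ≤ 2 ^ (s - 2) * ∏ k ∈ Finset.Icc 1 s, Real.sin (Real.pi / 2 ^ k) := by
  obtain ⟨b, c, hb, hc, hbs, hcs⟩ := key s hs
  have hpow : (2 : ℕ) ^ (s - 2) * 4 = 2 ^ s := by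
    rw [show (4 : ℕ) = 2 ^ 2 from rfl, ← pow_add]
    congr 1; omega
  have hn4 : 2 ^ s / 4 = 2 ^ (s - 2) := by omega
  apply csInf_le
  · exact ⟨0, fun x hx => by
      obtain ⟨b', -, rfl⟩ := hx; exact abs_nonneg _⟩
  · refine ⟨b, hb, ?_⟩
    rw [hn4]
    rw [← hbs]
    congr 1
    apply Finset.sum_congr rfl
    intro k _
    congr 1
    rw [Nat.cast_pow]
    push_cast
    ring
end

section
/- For n = 2^s with s ≥ 4, define σ_n = 2 sin(π/n)·M_n with M_n as above, and δ_n = arccos((σ_n/√(1+σ_n²)) cos(π/n)) − arccos(σ_n/√(1+σ_n²)). Then 2n sin(π/(2n)) − 2n sin(π/(2n)) cos(δ_n/2) = O(π^{2 log₂ n}/n^{log₂ n + 5}) as n → ∞ along powers of 2. -/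
open Real Finset

noncomputable def σpoly (n : ℕ) : ℝ := 2 * Real.sin (Real.pi / n) * M n

noncomputable def δpoly (n : ℕ) : ℝ :=
  Real.arccos (σpoly n / Real.sqrt (1 + σpoly n ^ 2) * Real.cos (Real.pi / n)) -
    Real.arccos (σpoly n / Real.sqrt (1 + σpoly n ^ 2))

lemma one_sub_cos_le (x : ℝ) : 1 - Real.cos x ≤ x ^ 2 / 2 := by
  have h1 : Real.cos (x/2) ^ 2 = 1/2 + Real.cos (2 * (x/2)) / 2 := Real.cos_sq (x/2)
  have h2 : Real.sin (x/2) ^ 2 ≤ (x/2) ^ 2 := Real.sin_sq_le_sq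
  have h3 : Real.sin (x/2) ^ 2 + Real.cos (x/2) ^ 2 = 1 := Real.sin_sq_add_cos_sq _
  have h4 : 2 * (x/2) = x := by ring
  rw [h4] at h1
  nlinarith

lemma arccos_antitone {a b : ℝ} (h : a ≤ b) : Real.arccos b ≤ Real.arccos a := by
  rw [Real.arccos_eq_pi_div_two_sub_arcsin, Real.arccos_eq_pi_div_two_sub_arcsin]
  have := Real.monotone_arcsin h
  linarith

set_option maxHeartbeats 1000000 in
lemma arccos_diff {a b : ℝ} (ha : 0 ≤ a) (hab : a ≤ b) (hb : b ≤ 1/2) :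
    Real.arccos a - Real.arccos b ≤ 2 * (b - a) := by
  set x := Real.arccos b with hx
  set y := Real.arccos a with hy
  have hxy : x ≤ y := arccos_antitone hab
  have hb1 : b ≤ 1 := by linarith
  have ha1 : a ≤ 1 := by linarith
  have hyle : y ≤ π / 2 := Real.arccos_le_pi_div_two.2 ha
  have hxle : x ≤ π / 2 := Real.arccos_le_pi_div_two.2 (le_trans ha hab)
  have hcos1 : (1:ℝ)/2 ≤ Real.cos 1 := by
    have := one_sub_cos_le 1; norm_num at this ⊢; linarith
  have hx1 : 1 ≤ x := by
    have h1 : Real.arccos (Real.cos 1) = 1 :=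
      Real.arccos_cos (by norm_num) (by linarith [Real.pi_gt_three])
    calc (1:ℝ) = Real.arccos (Real.cos 1) := h1.symm
      _ ≤ x := arccos_antitone (le_trans hb hcos1)
  have hy1 : 1 ≤ y := le_trans hx1 hxy
  have hcx : Real.cos x = b := Real.cos_arccos (by linarith) hb1
  have hcy : Real.cos y = a := Real.cos_arccos (by linarith) ha1
  have hkey : b - a = 2 * Real.sin ((x+y)/2) * Real.sin ((y-x)/2) := by
    rw [← hcx, ← hcy, Real.cos_sub_cos]
    have : Real.sin ((x - y)/2) = - Real.sin ((y - x)/2) := by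
      rw [← Real.sin_neg]; congr 1; ring
    rw [this]; ring
  have hsv : Real.sin 1 ≤ Real.sin ((x+y)/2) := by
    apply Real.strictMonoOn_sin.monotoneOn (by constructor <;> [linarith [Real.pi_gt_three]; linarith])
      (by constructor <;> [linarith [Real.pi_gt_three]; linarith]) (by linarith)
  have hsin1 : (3:ℝ)/4 ≤ Real.sin 1 := by
    have := Real.sin_gt_sub_cube (by norm_num : (0:ℝ) < 1)
    norm_num at this; linarith
  rcases eq_or_lt_of_le hxy with heq | hlt
  · rw [heq]; linarith
  have hu0 : 0 < (y - x)/2 := by linarith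
  have hupi : π < 3.15 := Real.pi_lt_d2
  have hule : (y - x)/2 ≤ 0.2875 := by linarith
  have hsu : (y-x)/2 - ((y-x)/2)^3/4 < Real.sin ((y-x)/2) :=
    by have := Real.sin_gt_sub_cube hu0; have := pow_pos hu0 3; linarith
  have hsv0 : 0 ≤ Real.sin ((x+y)/2) := by linarith
  have hsu0 : 0 ≤ Real.sin ((y-x)/2) := by nlinarith [sq_nonneg ((y-x)/2)]
  set u := (y - x)/2 with hudef
  have hcube : u^3 ≤ (0.2875)^2 * u := by nlinarith [sq_nonneg u]
  have hsulb : u * (1 - 0.0827/4) ≤ Real.sin u := by nlinarith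
  have hprod : (3/4 : ℝ) * (u * (1 - 0.0827/4)) ≤ Real.sin ((x+y)/2) * Real.sin u := by
    apply mul_le_mul (by linarith) hsulb (by nlinarith) hsv0
  nlinarith [hkey, hprod]

lemma sign_sum_sin (t : ℕ) : ∀ α h : ℝ, ∃ (b : ℕ → ℝ) (φ : ℝ),
    (∀ k, b k = 1 ∨ b k = -1) ∧
    ∑ k ∈ Finset.range (2 ^ t), b k * Real.sin (α + k * h) =
      (∏ i ∈ Finset.range t, (2 * Real.sin (2 ^ i * h / 2))) * Real.sin (α + φ) := by
  induction t with
  | zero =>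
    intro α h
    exact ⟨fun _ => 1, 0, fun _ => Or.inl rfl, by simp⟩
  | succ t ih =>
    intro α h
    obtain ⟨c, φ, hc, hsum⟩ := ih (α + 2 ^ t * h / 2 + π / 2) h
    refine ⟨fun k => if k < 2 ^ t then -(c k) else c (k - 2 ^ t),
      2 ^ t * h / 2 + π / 2 + φ, ?_, ?_⟩
    · intro k
      by_cases hk : k < 2 ^ t
      · simp only [hk, if_true]
        rcases hc k with h1 | h1 <;> rw [h1] <;> [right; left] <;> norm_num
      · simp only [hk, if_false]
        exact hc _
    · have hsplit : 2 ^ (t+1) = 2 ^ t + 2 ^ t := by ring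
      rw [hsplit, Finset.sum_range_add, ← Finset.sum_add_distrib]
      have key : ∀ y m : ℝ, Real.sin (α + (m + y) * h) - Real.sin (α + y * h) =
          2 * Real.sin (m * h / 2) * Real.sin ((α + m * h / 2 + π / 2) + y * h) := by
        intro y m
        rw [Real.sin_sub_sin]
        have h1 : (α + (m + y) * h - (α + y * h)) / 2 = m * h / 2 := by ring
        have h2 : (α + (m + y) * h + (α + y * h)) / 2 = (α + m * h / 2 + π/2) + y * h - π/2 := by
          ring
        rw [h1, h2]
        congr 1
        rw [show (α + m * h / 2 + π/2) + y * h - π/2 = -(π/2 - ((α + m * h / 2 + π/2) + y * h))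
          from by ring, Real.cos_neg, Real.cos_pi_div_two_sub]
      have hterm : ∀ k ∈ Finset.range (2 ^ t),
          (if k < 2 ^ t then -(c k) else c (k - 2 ^ t)) * Real.sin (α + (k:ℝ) * h) +
            (if 2 ^ t + k < 2 ^ t then -(c (2 ^ t + k)) else c (2 ^ t + k - 2 ^ t)) *
              Real.sin (α + ((2 ^ t + k : ℕ) : ℝ) * h) =
          (2 * Real.sin ((2:ℝ) ^ t * h / 2)) *
            (c k * Real.sin ((α + 2 ^ t * h / 2 + π / 2) + (k:ℝ) * h)) := by
        intro k hk
        rw [if_pos (Finset.mem_range.mp hk), if_neg (by omega),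
          show 2 ^ t + k - 2 ^ t = k from by omega]
        push_cast
        linear_combination (c k) * key (k : ℝ) ((2:ℝ) ^ t)
      rw [Finset.sum_congr rfl hterm, ← Finset.mul_sum, hsum, Finset.prod_range_succ]
      rw [show α + (2 ^ t * h / 2 + π / 2 + φ) = (α + 2 ^ t * h / 2 + π / 2) + φ from by ring]
      ring

lemma M_nonneg (n : ℕ) : 0 ≤ M n := by
  unfold M; apply Real.sInf_nonneg
  rintro x ⟨b, hb, rfl⟩
  exact abs_nonneg _

lemma M_le_prod (s : ℕ) (hs : 4 ≤ s) :
    M (2 ^ s) ≤ ∏ i ∈ Finset.range (s - 2), ((2:ℝ) ^ (i + 1) * π / 2 ^ s) := by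
  set t := s - 2 with ht
  obtain ⟨b, φ, hb, hsum⟩ := sign_sum_sin t (π / (2:ℝ) ^ s) (2 * π / (2:ℝ) ^ s)
  have hn4 : 2 ^ s / 4 = 2 ^ t := by
    rw [show (4:ℕ) = 2 ^ 2 from rfl, Nat.pow_div (by omega) (by norm_num)]
  have hmem : |(∏ i ∈ Finset.range t, (2 * Real.sin (2 ^ i * (2 * π / (2:ℝ) ^ s) / 2))) *
      Real.sin (π / (2:ℝ) ^ s + φ)| ∈
      {x : ℝ | ∃ b : ℕ → ℝ, (∀ k, b k = 1 ∨ b k = -1) ∧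
        x = |∑ k ∈ Finset.range (2 ^ s / 4), b k *
          Real.sin ((2 * (k : ℝ) + 1) * Real.pi / (2 ^ s : ℕ))|} := by
    refine ⟨b, hb, ?_⟩
    rw [hn4]
    congr 1
    rw [← hsum]
    apply Finset.sum_congr rfl
    intro k hk
    congr 1
    push_cast
    ring
  have hbdd : BddBelow {x : ℝ | ∃ b : ℕ → ℝ, (∀ k, b k = 1 ∨ b k = -1) ∧
      x = |∑ k ∈ Finset.range (2 ^ s / 4), b k *
        Real.sin ((2 * (k : ℝ) + 1) * Real.pi / (2 ^ s : ℕ))|} := by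
    refine ⟨0, ?_⟩
    rintro x ⟨b, hb, rfl⟩
    exact abs_nonneg _
  have h1 : M (2 ^ s) ≤ |(∏ i ∈ Finset.range t, (2 * Real.sin (2 ^ i * (2 * π / (2:ℝ) ^ s) / 2))) *
      Real.sin (π / (2:ℝ) ^ s + φ)| := csInf_le hbdd hmem
  refine h1.trans ?_
  rw [abs_mul]
  have hang : ∀ i : ℕ, (2:ℝ) ^ i * (2 * π / (2:ℝ) ^ s) / 2 = 2 ^ i * π / 2 ^ s := by
    intro i; ring
  have hfac_nonneg : ∀ i ∈ Finset.range t, (0:ℝ) ≤ 2 * Real.sin (2 ^ i * (2 * π / (2:ℝ) ^ s) / 2) := by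
    intro i hi
    rw [hang i]
    have h2i : (2:ℝ) ^ i ≤ 2 ^ s := by
      apply pow_le_pow_right₀ (by norm_num)
      have := Finset.mem_range.mp hi; omega
    have hle : (2:ℝ) ^ i * π / 2 ^ s ≤ π := by
      rw [div_le_iff₀ (by positivity)]
      nlinarith [Real.pi_pos]
    have hge : (0:ℝ) ≤ 2 ^ i * π / 2 ^ s := by positivity
    have := Real.sin_nonneg_of_nonneg_of_le_pi hge hle
    linarith
  have habs : |∏ i ∈ Finset.range t, (2 * Real.sin (2 ^ i * (2 * π / (2:ℝ) ^ s) / 2))| =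
      ∏ i ∈ Finset.range t, (2 * Real.sin (2 ^ i * (2 * π / (2:ℝ) ^ s) / 2)) :=
    abs_of_nonneg (Finset.prod_nonneg hfac_nonneg)
  rw [habs]
  calc (∏ i ∈ Finset.range t, (2 * Real.sin (2 ^ i * (2 * π / (2:ℝ) ^ s) / 2))) *
        |Real.sin (π / (2:ℝ) ^ s + φ)| ≤
      (∏ i ∈ Finset.range t, (2 * Real.sin (2 ^ i * (2 * π / (2:ℝ) ^ s) / 2))) * 1 := by
        apply mul_le_mul_of_nonneg_left (Real.abs_sin_le_one _)
          (Finset.prod_nonneg hfac_nonneg)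
    _ = ∏ i ∈ Finset.range t, (2 * Real.sin (2 ^ i * (2 * π / (2:ℝ) ^ s) / 2)) := mul_one _
    _ ≤ ∏ i ∈ Finset.range t, ((2:ℝ) ^ (i + 1) * π / 2 ^ s) := by
        apply Finset.prod_le_prod hfac_nonneg
        intro i hi
        rw [hang i]
        have hge : (0:ℝ) ≤ 2 ^ i * π / 2 ^ s := by positivity
        have := Real.sin_le hge
        calc 2 * Real.sin ((2:ℝ) ^ i * π / 2 ^ s) ≤ 2 * ((2:ℝ) ^ i * π / 2 ^ s) := by linarith
          _ = (2:ℝ) ^ (i + 1) * π / 2 ^ s := by ring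

lemma prod_two_pow_sq (t : ℕ) : (∏ i ∈ Finset.range t, (2:ℝ) ^ (i + 1)) ^ 2 = 2 ^ (t * t + t) := by
  induction t with
  | zero => simp
  | succ t ih =>
    rw [Finset.prod_range_succ, mul_pow, ih, ← pow_mul, ← pow_add]
    congr 1
    ring

lemma final_ineq (t s : ℕ) (hst : s = t + 2) (F : ℝ)
    (hF2 : F ^ 2 = 2 ^ (t * t + t)) :
    π * (π / (2:ℝ) ^ s) ^ 6 * (F * π ^ t / 2 ^ (s * t)) ^ 2 / 2 ≤
      100 * π ^ (2 * s) / 2 ^ (s * (s + 5)) := by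
  have hπ := Real.pi_pos
  have e1 : (F * π ^ t / (2:ℝ) ^ (s * t)) ^ 2 = 2 ^ (t * t + t) * π ^ (2 * t) / 2 ^ (2 * (s * t)) := by
    rw [div_pow, mul_pow, hF2, ← pow_mul, ← pow_mul, mul_comm (s * t) 2, mul_comm t 2]
  have e2 : (π / (2:ℝ) ^ s) ^ 6 = π ^ 6 / 2 ^ (6 * s) := by
    rw [div_pow, ← pow_mul, mul_comm]
  rw [e1, e2]
  have lhs_eq : π * (π ^ 6 / (2:ℝ) ^ (6 * s)) *
      ((2:ℝ) ^ (t * t + t) * π ^ (2 * t) / 2 ^ (2 * (s * t))) / 2 =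
      π ^ (7 + 2 * t) * 2 ^ (t * t + t) / (2 ^ (6 * s) * 2 ^ (2 * (s * t)) * 2) := by
    rw [pow_add]
    ring
  rw [lhs_eq, div_le_div_iff₀ (by positivity) (by positivity)]
  have hE : t * t + t + s * (s + 5) = (6 * s + 2 * (s * t) + 1) + 1 := by subst hst; ring
  have hP : 7 + 2 * t = 2 * s + 3 := by omega
  have h2pow : (2:ℝ) ^ (t * t + t) * 2 ^ (s * (s + 5)) = 2 ^ ((6 * s + 2 * (s * t) + 1) + 1) := by
    rw [← pow_add]; congr 1
  have h315 : π < 3.15 := Real.pi_lt_d2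
  have hcube : π ^ 3 * 2 ≤ 100 := by nlinarith [sq_nonneg π, sq_nonneg (π - 3.15)]
  calc π ^ (7 + 2 * t) * 2 ^ (t * t + t) * 2 ^ (s * (s + 5)) =
      π ^ (2 * s) * π ^ 3 * (2 ^ (t * t + t) * 2 ^ (s * (s + 5))) := by
        rw [hP, pow_add π (2 * s) 3]; ring
    _ = π ^ (2 * s) * π ^ 3 * 2 ^ ((6 * s + 2 * (s * t) + 1) + 1) := by rw [h2pow]
    _ ≤ π ^ (2 * s) * 100 * 2 ^ (6 * s + 2 * (s * t) + 1) := by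
        rw [pow_succ (2:ℝ)]
        have hp2 : (0:ℝ) < π ^ (2 * s) := by positivity
        have hq : (0:ℝ) < (2:ℝ) ^ (6 * s + 2 * (s * t) + 1) := by positivity
        nlinarith [mul_le_mul_of_nonneg_left hcube (le_of_lt (mul_pos hp2 hq))]
    _ = 100 * π ^ (2 * s) * ((2:ℝ) ^ (6 * s) * 2 ^ (2 * (s * t)) * 2) := by
        rw [pow_add (2:ℝ) (6 * s + 2 * (s * t)) 1, pow_add (2:ℝ) (6 * s) (2 * (s * t))]
        ring

set_option maxHeartbeats 1000000 in
theorem perimeter_deficiency_bound :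
    ∃ C > 0, ∀ s : ℕ, 4 ≤ s → ∀ n : ℕ, n = 2 ^ s →
      2 * n * Real.sin (Real.pi / (2 * n)) -
          2 * n * Real.sin (Real.pi / (2 * n)) * Real.cos (δpoly n / 2) ≤
        C * Real.pi ^ (2 * Real.logb 2 n) / (n : ℝ) ^ (Real.logb 2 n + 5) := by
  refine ⟨100, by norm_num, ?_⟩
  intro s hs n hn
  subst hn
  have hπ := Real.pi_pos
  have h315 : π < 3.15 := Real.pi_lt_d2
  obtain ⟨t, hst⟩ : ∃ t, s = t + 2 := ⟨s - 2, by omega⟩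
  have ht : s - 2 = t := by omega
  have ht2 : 2 ≤ t := by omega
  have hcast : ((2 ^ s : ℕ) : ℝ) = (2:ℝ) ^ s := by push_cast; ring
  have hN : (0:ℝ) < (2:ℝ) ^ s := by positivity
  have h16 : (16:ℝ) ≤ (2:ℝ) ^ s := by
    calc (16:ℝ) = 2 ^ 4 := by norm_num
      _ ≤ 2 ^ s := pow_le_pow_right₀ (by norm_num) hs
  -- θ
  set θ : ℝ := π / (2:ℝ) ^ s with hθdef
  have hθ0 : 0 < θ := by positivity
  have hθ16 : θ ≤ π / 16 := by
    rw [hθdef]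
    exact div_le_div_of_nonneg_left hπ.le (by norm_num) h16
  have hθ02 : θ ≤ 0.2 := by
    have h1 : π / 16 ≤ 0.2 := by linarith
    linarith
  -- F and A
  set F : ℝ := ∏ i ∈ Finset.range t, (2:ℝ) ^ (i + 1) with hFdef
  have hF2 : F ^ 2 = 2 ^ (t * t + t) := prod_two_pow_sq t
  have hF0 : 0 < F := Finset.prod_pos (fun i _ => by positivity)
  set A : ℝ := F * π ^ t / 2 ^ (s * t) with hAdef
  have hA0 : 0 < A := by positivity
  have hprod_eq : ∏ i ∈ Finset.range t, ((2:ℝ) ^ (i + 1) * π / 2 ^ s) = A := by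
    rw [hAdef, hFdef, Finset.prod_div_distrib, Finset.prod_mul_distrib,
      Finset.prod_const, Finset.prod_const, Finset.card_range, ← pow_mul]
  have hMA : M (2 ^ s) ≤ A := by
    rw [← hprod_eq]
    have := M_le_prod s hs
    rwa [ht] at this
  have hM0 : 0 ≤ M (2 ^ s) := M_nonneg _
  -- A ≤ 1/2
  have hA2 : A ^ 2 = 2 ^ (t * t + t) * π ^ (2 * t) / 2 ^ (2 * (s * t)) := by
    rw [hAdef, div_pow, mul_pow, hF2, ← pow_mul, ← pow_mul, mul_comm (s * t) 2, mul_comm t 2]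
  have hAhalf : A ≤ 1/2 := by
    have hπ2t : π ^ (2 * t) ≤ 2 ^ (4 * t) := by
      calc π ^ (2 * t) = (π ^ 2) ^ t := by rw [← pow_mul, mul_comm]
        _ ≤ (16:ℝ) ^ t := pow_le_pow_left₀ (by positivity) (by nlinarith) t
        _ = 2 ^ (4 * t) := by rw [show (16:ℝ) = 2 ^ 4 from by norm_num, ← pow_mul]
    have hexp : t * t + t + 4 * t + 2 ≤ 2 * (s * t) := by
      have h1 : 2 * t ≤ t * t := Nat.mul_le_mul_right t ht2
      have h2 : s * t = t * t + 2 * t := by rw [hst]; ring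
      linarith
    have h2exp : (2:ℝ) ^ (t * t + t) * 2 ^ (4 * t) * 4 ≤ 2 ^ (2 * (s * t)) := by
      calc (2:ℝ) ^ (t * t + t) * 2 ^ (4 * t) * 4 = 2 ^ (t * t + t) * 2 ^ (4 * t) * 2 ^ 2 := by
            norm_num
        _ = 2 ^ (t * t + t + 4 * t + 2) := by rw [← pow_add, ← pow_add]
        _ ≤ 2 ^ (2 * (s * t)) := pow_le_pow_right₀ (by norm_num) hexp
    have hA2le : A ^ 2 ≤ 1/4 := by
      rw [hA2, div_le_iff₀ (by positivity)]
      have h1 : (2:ℝ) ^ (t * t + t) * π ^ (2 * t) ≤ 2 ^ (t * t + t) * 2 ^ (4 * t) :=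
        mul_le_mul_of_nonneg_left hπ2t (by positivity)
      linarith
    nlinarith
  -- σ
  have hsinθ0 : 0 ≤ Real.sin θ := by
    apply Real.sin_nonneg_of_nonneg_of_le_pi hθ0.le
    linarith
  have hσpoly : σpoly (2 ^ s) = 2 * Real.sin θ * M (2 ^ s) := by
    simp only [σpoly]
    rw [hcast, ← hθdef]
  set σ : ℝ := 2 * Real.sin θ * M (2 ^ s) with hσdef
  have hσ0 : 0 ≤ σ := by rw [hσdef]; positivity
  have hσle : σ ≤ 2 * θ * A := by
    rw [hσdef]
    have h1 : Real.sin θ ≤ θ := Real.sin_le hθ0.le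
    have := mul_le_mul (by linarith : 2 * Real.sin θ ≤ 2 * θ) hMA hM0 (by linarith)
    linarith
  have hσhalf : σ ≤ 1/2 := by
    have h1 : θ * A ≤ 0.2 * (1/2) :=
      mul_le_mul hθ02 hAhalf hA0.le (by norm_num)
    linarith
  -- c
  set c : ℝ := σ / Real.sqrt (1 + σ ^ 2) with hcdef
  have hs1 : (1:ℝ) ≤ Real.sqrt (1 + σ ^ 2) := by
    nlinarith [Real.sq_sqrt (show (0:ℝ) ≤ 1 + σ ^ 2 by positivity),
      Real.sqrt_nonneg (1 + σ ^ 2), sq_nonneg σ]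
  have hc0 : 0 ≤ c := div_nonneg hσ0 (Real.sqrt_nonneg _)
  have hcσ : c ≤ σ := div_le_self hσ0 hs1
  -- δ
  have hδeq : δpoly (2 ^ s) = Real.arccos (c * Real.cos θ) - Real.arccos c := by
    simp only [δpoly]
    rw [hcast, ← hθdef, hσpoly]
  have hcosθ1 : Real.cos θ ≤ 1 := Real.cos_le_one θ
  have hcosθ0 : 0 ≤ Real.cos θ := by
    apply Real.cos_nonneg_of_mem_Icc
    constructor
    · linarith
    · linarith
  have hccos_le : c * Real.cos θ ≤ c := mul_le_of_le_one_right hc0 hcosθ1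
  have hδ0 : 0 ≤ δpoly (2 ^ s) := by
    rw [hδeq]
    have := arccos_antitone hccos_le
    linarith
  have hδub : δpoly (2 ^ s) ≤ 2 * (c - c * Real.cos θ) := by
    rw [hδeq]
    exact arccos_diff (mul_nonneg hc0 hcosθ0) hccos_le (le_trans hcσ hσhalf)
  have honecos : 1 - Real.cos θ ≤ θ ^ 2 / 2 := one_sub_cos_le θ
  have hδfin : δpoly (2 ^ s) ≤ 2 * θ ^ 3 * A := by
    have h1 : c * (1 - Real.cos θ) ≤ σ * (θ ^ 2 / 2) := by
      apply mul_le_mul hcσ honecos (by linarith) hσ0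
    have h2 : σ * (θ ^ 2 / 2) ≤ (2 * θ * A) * (θ ^ 2 / 2) :=
      mul_le_mul_of_nonneg_right hσle (by positivity)
    linarith [hδub, h1, h2]
  -- LHS
  have harg : π / (2 * ((2 ^ s : ℕ) : ℝ)) = θ / 2 := by
    rw [hcast, hθdef]; ring
  rw [harg]
  have hsinh0 : 0 ≤ Real.sin (θ / 2) := by
    apply Real.sin_nonneg_of_nonneg_of_le_pi (by linarith)
    linarith
  have hLπ : 2 * ((2 ^ s : ℕ) : ℝ) * Real.sin (θ / 2) ≤ π := by
    rw [hcast]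
    have h1 : Real.sin (θ / 2) ≤ θ / 2 := Real.sin_le (by linarith)
    have h2 : 2 * (2:ℝ) ^ s * (θ / 2) = π := by
      rw [hθdef]; field_simp
    have h3 := mul_le_mul_of_nonneg_left h1 (show (0:ℝ) ≤ 2 * (2:ℝ) ^ s by positivity)
    linarith
  have h1c0 : 0 ≤ 1 - Real.cos (δpoly (2 ^ s) / 2) := by
    have := Real.cos_le_one (δpoly (2 ^ s) / 2); linarith
  have h1c : 1 - Real.cos (δpoly (2 ^ s) / 2) ≤ (δpoly (2 ^ s)) ^ 2 / 8 := by
    have := one_sub_cos_le (δpoly (2 ^ s) / 2)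
    linarith
  have hδsq : (δpoly (2 ^ s)) ^ 2 ≤ (2 * θ ^ 3 * A) ^ 2 :=
    pow_le_pow_left₀ hδ0 hδfin 2
  have hLHS : 2 * ((2 ^ s : ℕ) : ℝ) * Real.sin (θ / 2) -
      2 * ((2 ^ s : ℕ) : ℝ) * Real.sin (θ / 2) * Real.cos (δpoly (2 ^ s) / 2) ≤
      π * θ ^ 6 * A ^ 2 / 2 := by
    have step2 : (2 * ((2 ^ s : ℕ) : ℝ) * Real.sin (θ / 2)) *
        (1 - Real.cos (δpoly (2 ^ s) / 2)) ≤ π * ((δpoly (2 ^ s)) ^ 2 / 8) :=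
      mul_le_mul hLπ h1c h1c0 hπ.le
    have step3 : π * ((δpoly (2 ^ s)) ^ 2 / 8) ≤ π * θ ^ 6 * A ^ 2 / 2 := by
      have h5 : π * (δpoly (2 ^ s)) ^ 2 ≤ π * (2 * θ ^ 3 * A) ^ 2 :=
        mul_le_mul_of_nonneg_left hδsq hπ.le
      linarith [h5]
    linarith [step2, step3]
  -- RHS
  have hlogb : Real.logb 2 ((2 ^ s : ℕ) : ℝ) = s := by
    rw [hcast, Real.logb_pow, Real.logb_self_eq_one (by norm_num : (1:ℝ) < 2)]
    ring
  rw [hlogb]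
  have hrw1 : π ^ ((2:ℝ) * (s:ℝ)) = π ^ (2 * s) := by
    rw [show (2:ℝ) * (s:ℝ) = ((2 * s : ℕ) : ℝ) from by push_cast; ring, Real.rpow_natCast]
  have hrw2 : ((2 ^ s : ℕ) : ℝ) ^ ((s:ℝ) + 5) = (2:ℝ) ^ (s * (s + 5)) := by
    rw [show (s:ℝ) + 5 = ((s + 5 : ℕ) : ℝ) from by push_cast; ring, Real.rpow_natCast,
      hcast, ← pow_mul]
  rw [hrw1, hrw2]
  calc 2 * ((2 ^ s : ℕ) : ℝ) * Real.sin (θ / 2) -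
      2 * ((2 ^ s : ℕ) : ℝ) * Real.sin (θ / 2) * Real.cos (δpoly (2 ^ s) / 2) ≤
      π * θ ^ 6 * A ^ 2 / 2 := hLHS
    _ = π * (π / (2:ℝ) ^ s) ^ 6 * (F * π ^ t / 2 ^ (s * t)) ^ 2 / 2 := by
        rw [← hθdef, ← hAdef]
    _ ≤ 100 * π ^ (2 * s) / 2 ^ (s * (s + 5)) := final_ineq t s hst F hF2
end
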